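/- Let X and Y be integrable real random variables. If the coupling of (X,Y) is comonotone (joint CDF min(F_X(s), F_Y(t))), then E|X - Y| ≤ E_π|X - Y| for every other coupling π of the same marginals. -/

import Mathlib

open MeasureTheory Set

lemma comon_pointwise_abs (x y : ℝ) :
    ENNReal.ofReal |x - y| = volume {t : ℝ | (x ≤ t ∧ ¬ y ≤ t) ∨ (y ≤ t ∧ ¬ x ≤ t)} := by
  have : {t : ℝ | (x ≤ t ∧ ¬ y ≤ t) ∨ (y ≤ t ∧ ¬ x ≤ t)} = Ico (min x y) (max x y) := by
    ext t
    simp only [mem_setOf_eq, mem_Ico, le_min_iff, min_le_iff, lt_max_iff, max_lt_iff, not_le]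
    constructor
    · rintro (⟨h1, h2⟩ | ⟨h1, h2⟩) <;> constructor <;> first | left; linarith | right; linarith
    · rintro ⟨h1 | h1, h2 | h2⟩
      · exact absurd h2 (not_lt.2 h1)
      · exact Or.inl ⟨h1, h2⟩
      · exact Or.inr ⟨h1, h2⟩
      · exact absurd h2 (not_lt.2 h1)
  rw [this, Real.volume_Ico]
  congr 1
  rcases le_total x y with h | h <;>
    simp [abs_sub_comm, abs_of_nonneg, abs_of_nonpos, min_eq_left, max_eq_right, h,
      min_eq_right, max_eq_left, abs_sub_le_iff]

lemma comon_layercake {α : Type*} [MeasurableSpace α] (ρ : Measure α) [IsProbabilityMeasure ρ]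
    (f g : α → ℝ) (hf : Measurable f) (hg : Measurable g) :
    ∫⁻ a, ENNReal.ofReal |f a - g a| ∂ρ
      = ∫⁻ t : ℝ, ρ {a | (f a ≤ t ∧ ¬ g a ≤ t) ∨ (g a ≤ t ∧ ¬ f a ≤ t)} := by
  have hS : MeasurableSet {q : α × ℝ | (f q.1 ≤ q.2 ∧ ¬ g q.1 ≤ q.2) ∨ (g q.1 ≤ q.2 ∧ ¬ f q.1 ≤ q.2)} := by
    have h1 : MeasurableSet {q : α × ℝ | f q.1 ≤ q.2} :=
      measurableSet_le (hf.comp measurable_fst) measurable_snd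
    have h2 : MeasurableSet {q : α × ℝ | g q.1 ≤ q.2} :=
      measurableSet_le (hg.comp measurable_fst) measurable_snd
    exact ((h1.inter h2.compl).union (h2.inter h1.compl))
  set S := {q : α × ℝ | (f q.1 ≤ q.2 ∧ ¬ g q.1 ≤ q.2) ∨ (g q.1 ≤ q.2 ∧ ¬ f q.1 ≤ q.2)} with hSdef
  calc ∫⁻ a, ENNReal.ofReal |f a - g a| ∂ρ
      = ∫⁻ a, ∫⁻ t : ℝ, S.indicator (fun _ => (1 : ENNReal)) (a, t) ∂volume ∂ρ := by
        refine lintegral_congr fun a => ?_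
        rw [comon_pointwise_abs (f a) (g a)]
        have hsec : MeasurableSet {t : ℝ | (f a ≤ t ∧ ¬ g a ≤ t) ∨ (g a ≤ t ∧ ¬ f a ≤ t)} := by
          have h1 : MeasurableSet {t : ℝ | f a ≤ t} := measurableSet_Ici
          have h2 : MeasurableSet {t : ℝ | g a ≤ t} := measurableSet_Ici
          exact (h1.inter h2.compl).union (h2.inter h1.compl)
        rw [← lintegral_indicator_one hsec]
        refine lintegral_congr fun t => ?_
        simp [Set.indicator_apply, hSdef, mem_setOf_eq]
    _ = ∫⁻ t : ℝ, ∫⁻ a, S.indicator (fun _ => (1 : ENNReal)) (a, t) ∂ρ ∂volume := by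
        exact lintegral_lintegral_swap ((measurable_const.indicator hS).aemeasurable)
    _ = ∫⁻ t : ℝ, ρ {a | (f a ≤ t ∧ ¬ g a ≤ t) ∨ (g a ≤ t ∧ ¬ f a ≤ t)} := by
        refine lintegral_congr fun t => ?_
        have h1 : MeasurableSet {a | f a ≤ t} := hf measurableSet_Iic
        have h2 : MeasurableSet {a | g a ≤ t} := hg measurableSet_Iic
        have hm : MeasurableSet {a | (f a ≤ t ∧ ¬ g a ≤ t) ∨ (g a ≤ t ∧ ¬ f a ≤ t)} :=
          (h1.inter h2.compl).union (h2.inter h1.compl)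
        rw [← lintegral_indicator_one hm]
        refine lintegral_congr fun a => ?_
        simp [Set.indicator_apply, hSdef, mem_setOf_eq]

lemma comon_symm_toReal {α : Type*} [MeasurableSpace α] (ρ : Measure α) [IsFiniteMeasure ρ]
    {A B : Set α} (hA : MeasurableSet A) (hB : MeasurableSet B) :
    (ρ (A \ B ∪ B \ A)).toReal = (ρ A).toReal + (ρ B).toReal - 2 * (ρ (A ∩ B)).toReal := by
  have hd : Disjoint (A \ B) (B \ A) := disjoint_sdiff_sdiff
  rw [measure_union hd (hB.diff hA)]
  have e1 : ρ (A \ B) = ρ A - ρ (A ∩ B) := by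
    rw [← Set.diff_self_inter]
    exact measure_diff Set.inter_subset_left (hA.inter hB).nullMeasurableSet (measure_ne_top ρ _)
  have e2 : ρ (B \ A) = ρ B - ρ (A ∩ B) := by
    rw [Set.inter_comm, ← Set.diff_self_inter]
    exact measure_diff Set.inter_subset_left (hB.inter hA).nullMeasurableSet (measure_ne_top ρ _)
  rw [ENNReal.toReal_add (by rw [e1]; exact (tsub_le_self.trans_lt (measure_lt_top ρ A)).ne)
    (by rw [e2]; exact (tsub_le_self.trans_lt (measure_lt_top ρ B)).ne), e1, e2,
    ENNReal.toReal_sub_of_le (measure_mono Set.inter_subset_left) (measure_ne_top ρ A),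
    ENNReal.toReal_sub_of_le (measure_mono (Set.inter_comm A B ▸ Set.inter_subset_left))
      (measure_ne_top ρ B)]
  ring

def IsCoupling (π : Measure (ℝ × ℝ)) (μ ν : Measure ℝ) : Prop :=
  IsProbabilityMeasure π ∧ π.map Prod.fst = μ ∧ π.map Prod.snd = ν

theorem comonotone_coupling_minimizes
    {Ω : Type*} [MeasurableSpace Ω] (P : Measure Ω) [IsProbabilityMeasure P]
    (X Y : Ω → ℝ) (hX : Measurable X) (hY : Measurable Y)
    (hXi : Integrable X P) (hYi : Integrable Y P)
    (hcom : ∀ s t : ℝ, (P {ω | X ω ≤ s ∧ Y ω ≤ t}).toReal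
      = min (ProbabilityTheory.cdf (Measure.map X P) s)
            (ProbabilityTheory.cdf (Measure.map Y P) t)) :
    ∀ π : Measure (ℝ × ℝ), IsCoupling π (Measure.map X P) (Measure.map Y P) →
      ∫ ω, |X ω - Y ω| ∂P ≤ ∫ p : ℝ × ℝ, |p.1 - p.2| ∂π := by
  rintro π ⟨hπprob, hfst, hsnd⟩
  haveI := hπprob
  haveI hμprob : IsProbabilityMeasure (Measure.map X P) :=
    Measure.isProbabilityMeasure_map hX.aemeasurable
  haveI hνprob : IsProbabilityMeasure (Measure.map Y P) :=
    Measure.isProbabilityMeasure_map hY.aemeasurable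
  -- integrability on the π side
  have hidX : Integrable id (Measure.map X P) :=
    (integrable_map_measure aestronglyMeasurable_id hX.aemeasurable).mpr hXi
  have hidY : Integrable id (Measure.map Y P) :=
    (integrable_map_measure aestronglyMeasurable_id hY.aemeasurable).mpr hYi
  have h1i : Integrable (fun p : ℝ × ℝ => p.1) π := by
    have := hfst ▸ hidX
    exact (integrable_map_measure aestronglyMeasurable_id measurable_fst.aemeasurable).mp this
  have h2i : Integrable (fun p : ℝ × ℝ => p.2) π := by
    have := hsnd ▸ hidY
    exact (integrable_map_measure aestronglyMeasurable_id measurable_snd.aemeasurable).mp this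
  have hπi : Integrable (fun p : ℝ × ℝ => |p.1 - p.2|) π := (h1i.sub h2i).abs
  have hXYi : Integrable (fun ω => |X ω - Y ω|) P := (hXi.sub hYi).abs
  -- marginal identities
  have hPA : ∀ t, P {ω | X ω ≤ t} = Measure.map X P (Iic t) := fun t => by
    rw [Measure.map_apply hX measurableSet_Iic]; rfl
  have hPB : ∀ t, P {ω | Y ω ≤ t} = Measure.map Y P (Iic t) := fun t => by
    rw [Measure.map_apply hY measurableSet_Iic]; rfl
  have hπ1 : ∀ t, π {p : ℝ × ℝ | p.1 ≤ t} = Measure.map X P (Iic t) := fun t => by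
    rw [← hfst, Measure.map_apply measurable_fst measurableSet_Iic]; rfl
  have hπ2 : ∀ t, π {p : ℝ × ℝ | p.2 ≤ t} = Measure.map Y P (Iic t) := fun t => by
    rw [← hsnd, Measure.map_apply measurable_snd measurableSet_Iic]; rfl
  -- key pointwise comparison
  have key : ∀ t : ℝ,
      P {ω | (X ω ≤ t ∧ ¬ Y ω ≤ t) ∨ (Y ω ≤ t ∧ ¬ X ω ≤ t)}
        ≤ π {p : ℝ × ℝ | (p.1 ≤ t ∧ ¬ p.2 ≤ t) ∨ (p.2 ≤ t ∧ ¬ p.1 ≤ t)} := by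
    intro t
    have hA : MeasurableSet {ω | X ω ≤ t} := hX measurableSet_Iic
    have hB : MeasurableSet {ω | Y ω ≤ t} := hY measurableSet_Iic
    have hA' : MeasurableSet {p : ℝ × ℝ | p.1 ≤ t} := measurable_fst measurableSet_Iic
    have hB' : MeasurableSet {p : ℝ × ℝ | p.2 ≤ t} := measurable_snd measurableSet_Iic
    have hsetP : {ω | (X ω ≤ t ∧ ¬ Y ω ≤ t) ∨ (Y ω ≤ t ∧ ¬ X ω ≤ t)}
        = ({ω | X ω ≤ t} \ {ω | Y ω ≤ t}) ∪ ({ω | Y ω ≤ t} \ {ω | X ω ≤ t}) := by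
      ext ω; simp [Set.mem_diff, Set.mem_union, mem_setOf_eq]
    have hsetπ : {p : ℝ × ℝ | (p.1 ≤ t ∧ ¬ p.2 ≤ t) ∨ (p.2 ≤ t ∧ ¬ p.1 ≤ t)}
        = ({p : ℝ × ℝ | p.1 ≤ t} \ {p | p.2 ≤ t}) ∪ ({p : ℝ × ℝ | p.2 ≤ t} \ {p | p.1 ≤ t}) := by
      ext p; simp [Set.mem_diff, Set.mem_union, mem_setOf_eq]
    rw [hsetP, hsetπ]
    refine (ENNReal.toReal_le_toReal (measure_ne_top P _) (measure_ne_top π _)).mp ?_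
    rw [comon_symm_toReal P hA hB, comon_symm_toReal π hA' hB']
    have hinterP : (P ({ω | X ω ≤ t} ∩ {ω | Y ω ≤ t})).toReal
        = min (ProbabilityTheory.cdf (Measure.map X P) t)
              (ProbabilityTheory.cdf (Measure.map Y P) t) := by
      have := hcom t t
      have hseteq : {ω | X ω ≤ t ∧ Y ω ≤ t} = {ω | X ω ≤ t} ∩ {ω | Y ω ≤ t} := rfl
      rw [hseteq] at this
      exact this
    have hinterπ : (π ({p : ℝ × ℝ | p.1 ≤ t} ∩ {p | p.2 ≤ t})).toReal
        ≤ min (ProbabilityTheory.cdf (Measure.map X P) t)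
              (ProbabilityTheory.cdf (Measure.map Y P) t) := by
      rw [ProbabilityTheory.cdf_eq_real, ProbabilityTheory.cdf_eq_real, measureReal_def,
        measureReal_def, le_min_iff]
      constructor
      · refine ENNReal.toReal_mono (measure_ne_top _ _) ?_
        rw [← hπ1 t]; exact measure_mono Set.inter_subset_left
      · refine ENNReal.toReal_mono (measure_ne_top _ _) ?_
        rw [← hπ2 t]; exact measure_mono Set.inter_subset_right
    have hmargX : (P {ω | X ω ≤ t}).toReal = (π {p : ℝ × ℝ | p.1 ≤ t}).toReal := by
      rw [hPA t, hπ1 t]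
    have hmargY : (P {ω | Y ω ≤ t}).toReal = (π {p : ℝ × ℝ | p.2 ≤ t}).toReal := by
      rw [hPB t, hπ2 t]
    rw [hinterP, hmargX, hmargY]
    linarith
  -- conclude
  rw [integral_eq_lintegral_of_nonneg_ae (ae_of_all _ fun ω => abs_nonneg _)
      hXYi.aestronglyMeasurable,
    integral_eq_lintegral_of_nonneg_ae (ae_of_all _ fun p => abs_nonneg _)
      hπi.aestronglyMeasurable]
  refine ENNReal.toReal_mono ?_ ?_
  · exact ((hasFiniteIntegral_iff_ofReal (ae_of_all _ fun p => abs_nonneg _)).mp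
      hπi.hasFiniteIntegral).ne
  · rw [comon_layercake P X Y hX hY,
      comon_layercake π (fun p => p.1) (fun p => p.2) measurable_fst measurable_snd]
    exact lintegral_mono key
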